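/- Suppose m ≥ 2 and D = n·s + d·f − Σ_{i=1}^m r_i·e_i ∈ Λ_m satisfies ⟨D, D⟩ = −2, ⟨D, K⟩ = 0, ⟨D, f⟩ ≥ 0, and ⟨D, e_m⟩ ≥ 0. Then there exists an even simple root σ with ⟨D, σ⟩ < 0. (This is the key lattice step showing that every −2-curve on a rational surface can be moved to a simple root by reflections in ineffective simple roots.) -/

import Mathlib

/-- The basis vector `s` of the lattice `Λ_m = ℤ^{m+2}` (coordinate 0). -/
def sV (m : ℕ) : Fin (m + 2) → ℤ := fun i => if (i : ℕ) = 0 then 1 else 0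

/-- The basis vector `f` of the lattice `Λ_m = ℤ^{m+2}` (coordinate 1). -/
def fV (m : ℕ) : Fin (m + 2) → ℤ := fun i => if (i : ℕ) = 1 then 1 else 0

/-- The basis vector `e_j` (for `1 ≤ j ≤ m`) of the lattice `Λ_m = ℤ^{m+2}`
(coordinate `j+1`). -/
def eV (m j : ℕ) : Fin (m + 2) → ℤ := fun i => if (i : ℕ) = j + 1 then 1 else 0

/-- The even intersection form on `Λ_m`: `⟨s,s⟩ = 0`, `⟨s,f⟩ = 1`, `⟨f,f⟩ = 0`,
`⟨s,e_i⟩ = ⟨f,e_i⟩ = 0`, `⟨e_i,e_j⟩ = −δ_{ij}`. -/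
def evenForm (m : ℕ) (u v : Fin (m + 2) → ℤ) : ℤ :=
  u 0 * v 1 + u 1 * v 0 - ∑ i : Fin (m + 2), if 2 ≤ (i : ℕ) then u i * v i else 0

/-- The canonical class `K = −2s − 2f + Σ_{i=1}^m e_i` (even case). -/
def evenK (m : ℕ) : Fin (m + 2) → ℤ :=
  (-2 : ℤ) • sV m + (-2 : ℤ) • fV m + ∑ j ∈ Finset.Icc 1 m, eV m j

/-- The even simple roots: `σ_0 = s − f`, `σ_1 = f − e_1 − e_2`,
`σ_k = e_{k−1} − e_k` for `2 ≤ k ≤ m`. -/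
def evenRoot (m k : ℕ) : Fin (m + 2) → ℤ :=
  if k = 0 then sV m - fV m
  else if k = 1 then fV m - eV m 1 - eV m 2
  else eV m (k - 1) - eV m k

open Fin.NatCast

lemma sum_tail' (m : ℕ) (G : ℕ → ℤ) :
    (∑ i : Fin (m+2), if 2 ≤ (i:ℕ) then G (i:ℕ) else 0)
      = ∑ j ∈ Finset.Icc 1 m, G (j+1) := by
  rw [Fin.sum_univ_eq_sum_range (fun k => if 2 ≤ k then G k else 0)]
  rw [← Finset.sum_filter]
  have h : (Finset.range (m+2)).filter (fun i => 2 ≤ i) = Finset.Ico 2 (m+2) := by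
    ext i
    simp only [Finset.mem_filter, Finset.mem_range, Finset.mem_Ico]
    omega
  rw [h, ← Finset.Ico_add_one_right_eq_Icc, Finset.sum_Ico_eq_sum_range, Finset.sum_Ico_eq_sum_range]
  apply Finset.sum_congr (by congr 1)
  intro j _; congr 1; omega

lemma form_eval (m : ℕ) (D v : Fin (m + 2) → ℤ) :
    evenForm m D v = D 0 * v 1 + D 1 * v 0
      - ∑ j ∈ Finset.Icc 1 m, D (↑(j+1)) * v (↑(j+1)) := by
  unfold evenForm
  congr 1
  have := sum_tail' m (fun k => D ↑k * v ↑k)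
  simpa [Fin.cast_val_eq_self] using this

lemma val0 (m : ℕ) : ((0 : Fin (m+2)) : ℕ) = 0 := rfl
lemma val1 (m : ℕ) : ((1 : Fin (m+2)) : ℕ) = 1 := by simp

lemma val_cast (m j : ℕ) (h : j ≤ m + 1) : (((j : ℕ) : Fin (m+2)) : ℕ) = j :=
  Fin.val_cast_of_lt (by omega)

lemma form_f (m : ℕ) (D : Fin (m + 2) → ℤ) : evenForm m D (fV m) = D 0 := by
  rw [form_eval, Finset.sum_eq_zero]
  · simp [fV, val0, val1]
  · intro j hj
    simp only [Finset.mem_Icc] at hj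
    have h := val_cast m (j+1) (by omega)
    simp only [fV, h]
    rw [if_neg (by omega), mul_zero]

lemma form_s (m : ℕ) (D : Fin (m + 2) → ℤ) : evenForm m D (sV m) = D 1 := by
  rw [form_eval, Finset.sum_eq_zero]
  · simp [sV, val0, val1]
  · intro j hj
    simp only [Finset.mem_Icc] at hj
    have h := val_cast m (j+1) (by omega)
    simp only [sV, h]
    rw [if_neg (by omega), mul_zero]

lemma form_e (m : ℕ) (D : Fin (m + 2) → ℤ) (j : ℕ) (h1 : 1 ≤ j) (hj : j ≤ m) :
    evenForm m D (eV m j) = - D (↑(j+1)) := by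
  rw [form_eval]
  have key : ∑ i ∈ Finset.Icc 1 m, D (↑(i+1)) * eV m j (↑(i+1)) = D (↑(j+1)) := by
    rw [Finset.sum_eq_single j]
    · have h := val_cast m (j+1) (by omega)
      have he : eV m j (↑(j+1)) = 1 := by
        show (if (((j+1 : ℕ) : Fin (m+2)) : ℕ) = j + 1 then (1:ℤ) else 0) = 1
        rw [if_pos h]
      rw [he, mul_one]
    · intro i hi hne
      simp only [Finset.mem_Icc] at hi
      have h := val_cast m (i+1) (by omega)
      simp only [eV, h]
      rw [if_neg (by omega), mul_zero]
    · intro hnot; exact absurd (Finset.mem_Icc.2 ⟨h1, hj⟩) hnot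
  rw [key]
  simp only [eV, val0, val1]
  split_ifs with hc hc' <;> first | omega | contradiction | ring

lemma form_self (m : ℕ) (D : Fin (m + 2) → ℤ) :
    evenForm m D D = 2 * D 0 * D 1 - ∑ j ∈ Finset.Icc 1 m, (D (↑(j+1)))^2 := by
  rw [form_eval]
  have : ∑ j ∈ Finset.Icc 1 m, D (↑(j+1)) * D (↑(j+1))
      = ∑ j ∈ Finset.Icc 1 m, (D (↑(j+1)))^2 :=
    Finset.sum_congr rfl (fun j _ => (sq (D (↑(j+1)))).symm)
  rw [this]; ring

lemma form_add (m : ℕ) (D u v : Fin (m + 2) → ℤ) :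
    evenForm m D (u + v) = evenForm m D u + evenForm m D v := by
  unfold evenForm
  have : ∀ i : Fin (m+2), (if 2 ≤ (i:ℕ) then D i * (u + v) i else 0)
      = (if 2 ≤ (i:ℕ) then D i * u i else 0) + (if 2 ≤ (i:ℕ) then D i * v i else 0) := by
    intro i; simp only [Pi.add_apply]; split <;> ring
  rw [Finset.sum_congr rfl (fun i _ => this i), Finset.sum_add_distrib]
  simp only [Pi.add_apply]; ring

lemma form_smul (m : ℕ) (D : Fin (m + 2) → ℤ) (c : ℤ) (u : Fin (m + 2) → ℤ) :
    evenForm m D (c • u) = c * evenForm m D u := by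
  unfold evenForm
  have : ∀ i : Fin (m+2), (if 2 ≤ (i:ℕ) then D i * (c • u) i else 0)
      = c * (if 2 ≤ (i:ℕ) then D i * u i else 0) := by
    intro i; simp only [Pi.smul_apply, smul_eq_mul]; split <;> ring
  rw [Finset.sum_congr rfl (fun i _ => this i), ← Finset.mul_sum]
  simp only [Pi.smul_apply, smul_eq_mul]; ring

lemma form_zero (m : ℕ) (D : Fin (m + 2) → ℤ) : evenForm m D 0 = 0 := by
  simp [evenForm]

lemma form_sub (m : ℕ) (D u v : Fin (m + 2) → ℤ) :
    evenForm m D (u - v) = evenForm m D u - evenForm m D v := by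
  have := form_add m D (u - v) v
  simp only [sub_add_cancel] at this
  linarith

lemma form_sum (m : ℕ) (D : Fin (m + 2) → ℤ) {α : Type*} (s : Finset α)
    (g : α → Fin (m + 2) → ℤ) :
    evenForm m D (∑ j ∈ s, g j) = ∑ j ∈ s, evenForm m D (g j) := by
  classical
  induction s using Finset.induction with
  | empty => simp [form_zero]
  | insert _ _ h ih => rw [Finset.sum_insert h, Finset.sum_insert h, form_add, ih]

/-- For `m ≥ 2`, if `D ∈ Λ_m` satisfies `⟨D, D⟩ = −2`, `⟨D, K⟩ = 0`, `⟨D, f⟩ ≥ 0` and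
`⟨D, e_m⟩ ≥ 0`, then there exists an even simple root `σ` with `⟨D, σ⟩ < 0`.  (This is
the key lattice step showing that every `−2`-curve on a rational surface can be moved to
a simple root by reflections in ineffective simple roots.) -/
theorem neg_two_class_meets_some_root_negatively (m : ℕ) (hm : 2 ≤ m)
    (D : Fin (m + 2) → ℤ)
    (h2 : evenForm m D D = -2) (hK : evenForm m D (evenK m) = 0)
    (hf : 0 ≤ evenForm m D (fV m)) (hem : 0 ≤ evenForm m D (eV m m)) :
    ∃ k, k ≤ m ∧ evenForm m D (evenRoot m k) < 0 := by
  by_contra hcon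
  push_neg at hcon
  set n := D 0 with hn_def
  set d := D 1 with hd_def
  set r : ℕ → ℤ := fun j => - D (↑(j+1)) with hr_def
  -- basic facts
  have hn : 0 ≤ n := by rwa [form_f] at hf
  have hrm : 0 ≤ r m := by rw [form_e m D m (by omega) le_rfl] at hem; exact hem
  -- sum conditions
  have hKsum : ∑ j ∈ Finset.Icc 1 m, r j = 2 * n + 2 * d := by
    rw [evenK, form_add, form_add, form_smul, form_smul, form_s, form_f, form_sum] at hK
    have : ∑ j ∈ Finset.Icc 1 m, evenForm m D (eV m j) = ∑ j ∈ Finset.Icc 1 m, r j := by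
      apply Finset.sum_congr rfl
      intro j hj
      simp only [Finset.mem_Icc] at hj
      rw [form_e m D j hj.1 hj.2]
    rw [this] at hK
    linarith
  have hQ : 2 * n * d - ∑ j ∈ Finset.Icc 1 m, (r j)^2 = -2 := by
    rw [form_self] at h2
    have : ∑ j ∈ Finset.Icc 1 m, (D (↑(j+1)))^2 = ∑ j ∈ Finset.Icc 1 m, (r j)^2 := by
      apply Finset.sum_congr rfl
      intro j _
      simp only [hr_def, neg_sq]
    rw [this] at h2
    linarith
  -- consequences of hcon
  have h0 : n ≤ d := by
    have := hcon 0 (by omega)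
    rw [show evenRoot m 0 = sV m - fV m from if_pos rfl, form_sub, form_s, form_f] at this
    linarith
  have h1 : r 1 + r 2 ≤ n := by
    have := hcon 1 (by omega)
    rw [show evenRoot m 1 = fV m - eV m 1 - eV m 2 from rfl, form_sub, form_sub,
      form_f, form_e m D 1 le_rfl (by omega), form_e m D 2 (by omega) hm] at this
    simp only [hr_def]
    linarith
  have hmono : ∀ k, 2 ≤ k → k ≤ m → r k ≤ r (k-1) := by
    intro k h2k hkm
    have := hcon k (by omega)
    rw [show evenRoot m k = eV m (k-1) - eV m k from by
        rw [evenRoot, if_neg (by omega), if_neg (by omega)],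
      form_sub, form_e m D (k-1) (by omega) (by omega), form_e m D k (by omega) hkm] at this
    have hkk : k - 1 + 1 = k := by omega
    rw [hkk] at this
    simp only [hr_def, hkk]
    linarith
  have chain : ∀ k, k ≤ m → ∀ j, 1 ≤ j → j ≤ k → r k ≤ r j := by
    intro k
    induction k with
    | zero => omega
    | succ k ih =>
      intro hk j hj hjk
      rcases Nat.lt_or_ge j (k+1) with h | h
      · have h1 : r (k+1) ≤ r k := by
          have := hmono (k+1) (by omega) hk
          simpa using this
        exact le_trans h1 (ih (by omega) j hj (by omega))
      · have : j = k + 1 := by omega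
        rw [this]
  have hr_nonneg : ∀ j, 1 ≤ j → j ≤ m → 0 ≤ r j := by
    intro j hj hjm
    exact le_trans hrm (chain m le_rfl j hj hjm)
  have hr2 : ∀ j, 2 ≤ j → j ≤ m → r j ≤ r 2 := by
    intro j hj hjm
    exact chain j hjm 2 (by omega) hj
  -- split the sums
  have hsplit : Finset.Icc 1 m = insert 1 (Finset.Icc 2 m) := by
    ext i
    simp only [Finset.mem_insert, Finset.mem_Icc]
    omega
  have hnotmem : (1:ℕ) ∉ Finset.Icc 2 m := by simp
  set S2 := ∑ j ∈ Finset.Icc 2 m, r j with hS2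
  have hsum1 : r 1 + S2 = 2 * n + 2 * d := by
    rw [hsplit, Finset.sum_insert hnotmem] at hKsum
    exact hKsum
  have hsq : ∑ j ∈ Finset.Icc 1 m, (r j)^2 ≤ (r 1)^2 + r 2 * S2 := by
    rw [hsplit, Finset.sum_insert hnotmem]
    have : ∑ j ∈ Finset.Icc 2 m, (r j)^2 ≤ ∑ j ∈ Finset.Icc 2 m, r 2 * r j := by
      apply Finset.sum_le_sum
      intro j hj
      simp only [Finset.mem_Icc] at hj
      have h1 := hr_nonneg j (by omega) hj.2
      have h2 := hr2 j hj.1 hj.2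
      nlinarith
    rw [← Finset.mul_sum] at this
    linarith
  -- final contradiction
  have hr1 : 0 ≤ r 1 := hr_nonneg 1 (by omega) (by omega)
  have hr2n : 0 ≤ r 2 := hr_nonneg 2 (by omega) hm
  have hr12 : r 2 ≤ r 1 := chain 2 hm 1 (by omega) (by omega)
  nlinarith [mul_nonneg (by linarith : (0:ℤ) ≤ n - r 1 - r 2) (by linarith : (0:ℤ) ≤ d - r 1 - r 2),
    mul_nonneg hr1 (by linarith : (0:ℤ) ≤ n - r 1 - r 2),
    mul_nonneg hr1 (by linarith : (0:ℤ) ≤ d - r 1 - r 2),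
    mul_nonneg (by linarith : (0:ℤ) ≤ r 1 - r 2) (by linarith : (0:ℤ) ≤ r 1 + 2 * r 2)]
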